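/- String induction: let P be a predicate on the natural numbers. If P 0 holds, and for every natural number x, P x implies P(x ⊕ 1), and for every natural number x, P x implies P(x ⊕ 2), then P x holds for every natural number x. -/

import Mathlib

def Q (x : ℕ) : ℕ := 2 ^ Nat.log 2 (x + 1)

def R (x : ℕ) : ℕ := (x + 1) - Q x

def cat (x y : ℕ) : ℕ := (x + 1) * Q y + R y - 1

infixl:65 " ⊙ " => cat

lemma cat_one (x : ℕ) : x ⊙ 1 = 2 * x + 1 := by
  show (x + 1) * Q 1 + R 1 - 1 = 2 * x + 1
  have hQ : Q 1 = 2 := by simp [Q, R, Nat.log]; rfl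
  have hR : R 1 = 0 := by simp [Q, R, Nat.log]; rfl
  rw [hQ, hR]; ring_nf; omega

lemma cat_two (x : ℕ) : x ⊙ 2 = 2 * x + 2 := by
  show (x + 1) * Q 2 + R 2 - 1 = 2 * x + 2
  have hQ : Q 2 = 2 := by simp [Q, R, Nat.log]; rfl
  have hR : R 2 = 1 := by simp [Q, R, Nat.log]; rfl
  rw [hQ, hR]; ring_nf; omega

theorem stmt_19 (P : ℕ → Prop) (h0 : P 0)
    (h1 : ∀ x : ℕ, P x → P (x ⊙ 1)) (h2 : ∀ x : ℕ, P x → P (x ⊙ 2)) :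
    ∀ x : ℕ, P x := by
  intro x
  induction x using Nat.strong_induction_on with
  | _ n ih =>
    rcases n with _ | m
    · exact h0
    · rcases Nat.even_or_odd (m + 1) with ⟨k, hk⟩ | ⟨k, hk⟩
      · have hk1 : k ≥ 1 := by omega
        have he : m + 1 = (k - 1) ⊙ 2 := by rw [cat_two]; omega
        rw [he]; exact h2 _ (ih _ (by omega))
      · have he : m + 1 = k ⊙ 1 := by rw [cat_one]; omega
        rw [he]; exact h1 _ (ih _ (by omega))
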